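/- arXiv:1109.6398 — 5 statements merged into one kernel-verified Lean document; each statement's English description precedes it below -/
import Mathlib

section
/- Let f and g be non-constant polynomials with real coefficients, of degrees m and n respectively, and for s > 0 let θ_s be the angle between the vectors (a_i s^i) and (b_i s^i) of their coefficients (padded with zeros to length max(m,n)+1). Then |Res(f,g)| ≤ |sin θ_s|^{min(m,n)} · ‖f‖_{2,s}^n · ‖g‖_{2,s}^m for all s > 0. -/
open Polynomial Finset

/-- The Sylvester matrix of two real polynomials `f` and `g` (with `g.natDegree` rows of
coefficients of `f` and `f.natDegree` rows of coefficients of `g`). -/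
noncomputable def sylvester (f g : Polynomial ℝ) :
    Matrix (Fin (f.natDegree + g.natDegree)) (Fin (f.natDegree + g.natDegree)) ℝ :=
  Matrix.of fun i j =>
    if (i : ℕ) < g.natDegree then
      (if (i : ℕ) ≤ (j : ℕ) ∧ (j : ℕ) ≤ (i : ℕ) + f.natDegree then
        f.coeff (f.natDegree - ((j : ℕ) - (i : ℕ))) else 0)
    else
      (if (i : ℕ) - g.natDegree ≤ (j : ℕ) ∧ (j : ℕ) ≤ (i : ℕ) - g.natDegree + g.natDegree then
        g.coeff (g.natDegree - ((j : ℕ) - ((i : ℕ) - g.natDegree))) else 0)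

/-- The resultant of two real polynomials: the determinant of their Sylvester matrix. -/
noncomputable def resultant (f g : Polynomial ℝ) : ℝ := (_root_.sylvester f g).det

/-- The skewed 2-norm `‖f‖_{2,s} = (∑ᵢ |aᵢ s^{i - d/2}|²)^{1/2}` of a real polynomial. -/
noncomputable def skewNorm (f : Polynomial ℝ) (s : ℝ) : ℝ :=
  Real.sqrt (∑ i ∈ Finset.range (f.natDegree + 1),
    (f.coeff i) ^ 2 * s ^ (2 * (i : ℝ) - (f.natDegree : ℝ)))

/-- `|sin θ_s|` where `θ_s` is the angle between the skew-scaled coefficient vectors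
`(aᵢ sⁱ)` and `(bᵢ sⁱ)` of `f` and `g`, padded with zeros to length `max(m,n) + 1`. -/
noncomputable def sinTheta (f g : Polynomial ℝ) (s : ℝ) : ℝ :=
  let D := max f.natDegree g.natDegree
  let u : Fin (D + 1) → ℝ := fun i => f.coeff i * s ^ (i : ℕ)
  let v : Fin (D + 1) → ℝ := fun i => g.coeff i * s ^ (i : ℕ)
  Real.sqrt (1 - (∑ i, u i * v i) ^ 2 / ((∑ i, u i ^ 2) * (∑ i, v i ^ 2)))


open Matrix

lemma psd_diag_nonneg {n : ℕ} {G : Matrix (Fin n) (Fin n) ℝ} (hG : G.PosSemidef)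
    (i : Fin n) : 0 ≤ G i i := by
  exact hG.diag_nonneg

lemma psd_det_le_prod_diag : ∀ (n : ℕ) (G : Matrix (Fin n) (Fin n) ℝ),
    G.PosSemidef → G.det ≤ ∏ i, G i i := by
  intro n
  induction n with
  | zero => intro G _; simp [Matrix.det_fin_zero]
  | succ n ih =>
    intro G hG
    by_cases h0 : G 0 0 = 0
    · have hx : G *ᵥ (Pi.single (0 : Fin (n+1)) (1:ℝ)) = 0 := by
        rw [← hG.dotProduct_mulVec_zero_iff]
        simp [Matrix.mulVec_single, dotProduct, Pi.single_apply, h0]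
      have hdet : G.det = 0 := by
        apply Matrix.det_eq_zero_of_column_eq_zero 0
        intro i
        have := congrFun hx i
        simpa [Matrix.mulVec_single] using this
      rw [hdet]
      exact Finset.prod_nonneg fun i _ => psd_diag_nonneg hG i
    · -- G 0 0 ≠ 0
      have h00 : 0 < G 0 0 := lt_of_le_of_ne (psd_diag_nonneg hG 0) (Ne.symm h0)
      set e : Fin 1 ⊕ Fin n ≃ Fin (n+1) :=
        finSumFinEquiv.trans (finCongr (Nat.add_comm 1 n)) with he
      have he0 : e (Sum.inl 0) = 0 := by
        apply Fin.ext; simp [he, finSumFinEquiv]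
      have hesucc : ∀ i : Fin n, e (Sum.inr i) = i.succ := by
        intro i; apply Fin.ext; simp [he, finSumFinEquiv]
      set H := G.submatrix e e with hH
      have hHpsd : H.PosSemidef := hG.submatrix e
      set A := H.toBlocks₁₁ with hA
      set B := H.toBlocks₁₂ with hB
      set D := H.toBlocks₂₂ with hD
      have hCB : H.toBlocks₂₁ = Bᴴ := by
        ext i j
        simpa [Matrix.toBlocks₂₁, hB, Matrix.toBlocks₁₂, Matrix.conjTranspose_apply] using
          (hHpsd.isHermitian.apply (Sum.inr i) (Sum.inl j)).symm
      have hHb : H = Matrix.fromBlocks A B Bᴴ D := by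
        rw [hA, hB, hD, ← hCB]; exact (Matrix.fromBlocks_toBlocks H).symm
      have hA00 : A 0 0 = G 0 0 := by simp [hA, Matrix.toBlocks₁₁, hH, he0]
      have hApos : A.PosDef := by
        rw [Matrix.posDef_iff_dotProduct_mulVec]
        constructor
        · ext i j
          have : i = j := Subsingleton.elim i j
          simp [this, Matrix.conjTranspose_apply]
        · intro x hx
          have hx0 : x 0 ≠ 0 := by
            intro h; apply hx; ext i; rw [Subsingleton.elim i 0]; exact h
          simp only [dotProduct, Matrix.mulVec, Fin.sum_univ_one, star_trivial]
          rw [show (0 : Fin 1) = default from rfl] at hA00 ⊢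
          calc (0:ℝ) < (x default * x default) * A default default := by
                  rw [hA00 ]; exact mul_pos (mul_self_pos.mpr hx0) h00
            _ = x default * (A default default * x default) := by ring
      have hAinv : Invertible A := by
        apply A.invertibleOfIsUnitDet
        rw [Matrix.det_fin_one]
        simp [hA00]
        exact h0
      have hdetA : A.det = G 0 0 := by rw [Matrix.det_fin_one, hA00]
      -- Schur complement
      set S := D - Bᴴ * A⁻¹ * B with hS
      have hSpsd : S.PosSemidef := by
        rw [← Matrix.PosDef.fromBlocks₁₁ B D hApos]
        rw [← hHb]; exact hHpsd
      have hdet : G.det = G 0 0 * S.det := by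
        rw [← Matrix.det_submatrix_equiv_self e, ← hH, hHb,
          Matrix.det_fromBlocks₁₁, hdetA, Matrix.invOf_eq_nonsing_inv]
      have hAinvE : A⁻¹ = Matrix.of (fun _ _ : Fin 1 => (G 0 0)⁻¹) := by
        rw [Matrix.inv_def, Matrix.adjugate_fin_one, Matrix.det_fin_one, hA00]
        ext i j
        rw [Subsingleton.elim i 0, Subsingleton.elim j 0]
        simp [Ring.inverse_eq_inv]
      have hSle : ∀ i : Fin n, S i i ≤ D i i := by
        intro i
        have : (Bᴴ * A⁻¹ * B) i i = (B 0 i)^2 * (G 0 0)⁻¹ := by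
          simp [Matrix.mul_apply, hAinvE, Fin.sum_univ_one, Matrix.conjTranspose_apply]
          ring
        simp only [hS, Matrix.sub_apply, this]
        have : 0 ≤ (B 0 i)^2 * (G 0 0)⁻¹ := by positivity
        linarith
      calc G.det = G 0 0 * S.det := hdet
        _ ≤ G 0 0 * ∏ i, S i i := by
            exact mul_le_mul_of_nonneg_left (ih S hSpsd) h00.le
        _ ≤ G 0 0 * ∏ i, D i i := by
            apply mul_le_mul_of_nonneg_left _ h00.le
            exact Finset.prod_le_prod (fun i _ => psd_diag_nonneg hSpsd i) (fun i _ => hSle i)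
        _ = ∏ i, G i i := by
            rw [Fin.prod_univ_succ]
            congr 1
            apply Finset.prod_congr rfl
            intro i _
            simp [hD, Matrix.toBlocks₂₂, hH, hesucc]

lemma hadamard_ineq {N : ℕ} (A : Matrix (Fin N) (Fin N) ℝ) :
    |A.det| ≤ ∏ i, Real.sqrt (∑ j, A i j ^ 2) := by
  have hAt : Aᴴ = Aᵀ := Matrix.conjTranspose_eq_transpose_of_trivial A
  have hpsd : (A * Aᵀ).PosSemidef := by
    have := Matrix.posSemidef_self_mul_conjTranspose A
    rwa [hAt] at this
  have hdet : (A * Aᵀ).det = A.det ^ 2 := by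
    rw [Matrix.det_mul, Matrix.det_transpose]; ring
  have hdiag : ∀ i, (A * Aᵀ) i i = ∑ j, A i j ^ 2 := by
    intro i; simp [Matrix.mul_apply, Matrix.transpose_apply, sq]
  have h1 : A.det ^ 2 ≤ ∏ i, ∑ j, A i j ^ 2 := by
    rw [← hdet]
    calc (A * Aᵀ).det ≤ ∏ i, (A * Aᵀ) i i := psd_det_le_prod_diag N _ hpsd
      _ = ∏ i, ∑ j, A i j ^ 2 := Finset.prod_congr rfl fun i _ => hdiag i
  have h2 : (∏ i, Real.sqrt (∑ j, A i j ^ 2)) ^ 2 = ∏ i, ∑ j, A i j ^ 2 := by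
    rw [← Finset.prod_pow]
    exact Finset.prod_congr rfl fun i _ => Real.sq_sqrt (by positivity)
  calc |A.det| = Real.sqrt (A.det ^ 2) := (Real.sqrt_sq_eq_abs _).symm
    _ ≤ Real.sqrt (∏ i, ∑ j, A i j ^ 2) := Real.sqrt_le_sqrt h1
    _ = ∏ i, Real.sqrt (∑ j, A i j ^ 2) := by
        rw [← h2]
        exact Real.sqrt_sq (Finset.prod_nonneg fun i _ => Real.sqrt_nonneg _)


lemma det_rowop {N : ℕ} (M : Matrix (Fin N) (Fin N) ℝ) (P : Fin N → Prop) [DecidablePred P]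
    (p : Fin N → Fin N) (c : Fin N → ℝ) (hp : ∀ i, P i → p i < i) :
    (Matrix.of fun i j => if P i then M i j - c i * M (p i) j else M i j).det = M.det := by
  set L : Matrix (Fin N) (Fin N) ℝ :=
    Matrix.of fun i j => if i = j then 1 else if P i ∧ j = p i then -(c i) else 0 with hLdef
  have hLtri : L.BlockTriangular OrderDual.toDual := by
    intro i j hij
    have hij' : i < j := hij
    simp only [hLdef, Matrix.of_apply]
    rw [if_neg (by exact fun h => absurd h (ne_of_lt hij')), if_neg]
    rintro ⟨hPi, hpj⟩
    exact absurd (hpj ▸ hp i hPi) (lt_asymm hij')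
  have hLdet : L.det = 1 := by
    rw [Matrix.det_of_lowerTriangular L hLtri]
    exact Finset.prod_eq_one fun i _ => by simp [hLdef]
  have hLM : L * M = Matrix.of fun i j => if P i then M i j - c i * M (p i) j else M i j := by
    ext i j
    rw [Matrix.mul_apply]
    by_cases hPi : P i
    · have hpi : p i ≠ i := ne_of_lt (hp i hPi)
      have : ∀ k, L i k * M k j =
          (if k = i then M i j else 0) + (if k = p i then -(c i) * M (p i) j else 0) := by
        intro k
        by_cases hk : k = i
        · subst hk
          simp [hLdef, hpi.symm, (Ne.symm hpi)]
        · by_cases hk2 : k = p i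
          · subst hk2
            simp [hLdef, hk, hPi, Ne.symm hpi]
          · simp [hLdef, hk, hk2, Ne.symm hk]
      rw [Finset.sum_congr rfl fun k _ => this k, Finset.sum_add_distrib,
        Finset.sum_ite_eq' univ i (fun _ => M i j),
        Finset.sum_ite_eq' univ (p i) (fun _ => -(c i) * M (p i) j)]
      simp [hPi]
      ring
    · have : ∀ k, L i k * M k j = if k = i then M i j else 0 := by
        intro k
        by_cases hk : k = i
        · subst hk; simp [hLdef]
        · simp only [hLdef, Matrix.of_apply, if_neg hk, if_neg (fun h : P i ∧ k = p i => hPi h.1),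
            if_neg (Ne.symm hk)]
          ring
      rw [Finset.sum_congr rfl fun k _ => this k,
        Finset.sum_ite_eq' univ i (fun _ => M i j)]
      simp [hPi]
  rw [← hLM, Matrix.det_mul, hLdet, one_mul]


lemma window_sum {N : ℕ} (φ : ℕ → ℝ) (l e : ℕ) (hl : l ≤ e) (he : e < N) :
    ∑ c : Fin N, (if l ≤ (c : ℕ) ∧ (c : ℕ) ≤ e then φ (e - (c : ℕ)) else 0)
      = ∑ k ∈ range (e - l + 1), φ k := by
  rw [Fin.sum_univ_eq_sum_range (fun c => if l ≤ c ∧ c ≤ e then φ (e - c) else 0) N]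
  rw [← Finset.sum_filter]
  have hfe : (range N).filter (fun c => l ≤ c ∧ c ≤ e) = Finset.Icc l e := by
    ext c; simp only [mem_filter, mem_range, mem_Icc]; omega
  rw [hfe]
  apply Finset.sum_nbij' (fun c => e - c) (fun k => e - k)
  · intro c hc; simp only [mem_Icc, mem_range] at *; omega
  · intro k hk; simp only [mem_Icc, mem_range] at *; omega
  · intro c hc; simp only [mem_Icc] at hc; omega
  · intro k hk; simp only [mem_range] at hk; omega
  · intro c _; rfl

lemma card_filter_lt (m n : ℕ) :
    ((univ : Finset (Fin (m + n))).filter (fun i : Fin (m+n) => (i : ℕ) < n)).card = n := by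
  have h : (univ : Finset (Fin (m+n))).filter (fun i : Fin (m+n) => (i : ℕ) < n)
      = Finset.map (Fin.castLEEmb (Nat.le_add_left n m)) univ := by
    ext j
    simp only [mem_filter, mem_univ, true_and, Finset.mem_map, Fin.castLEEmb, Fin.castLE]
    constructor
    · intro hj; exact ⟨⟨(j : ℕ), hj⟩, by simp [Fin.ext_iff]⟩
    · rintro ⟨a, ha⟩
      have : (a : ℕ) = (j : ℕ) := by
        have := congrArg (Fin.val) ha; simpa using this
      omega
  rw [h, Finset.card_map, Finset.card_univ, Fintype.card_fin]

lemma skew_aux (f g : Polynomial ℝ) (hf : 0 < f.natDegree) (hg : 0 < g.natDegree)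
    (s : ℝ) (hs : 0 < s) :
    |(_root_.sylvester f g).det| * s ^ (f.natDegree * g.natDegree) ≤
      Real.sqrt (1 -
          (∑ k ∈ range (max f.natDegree g.natDegree + 1),
            (f.coeff k * s ^ k) * (g.coeff k * s ^ k)) ^ 2 /
          ((∑ k ∈ range (max f.natDegree g.natDegree + 1), (f.coeff k * s ^ k) ^ 2) *
           (∑ k ∈ range (max f.natDegree g.natDegree + 1), (g.coeff k * s ^ k) ^ 2)))
        ^ min f.natDegree g.natDegree *
      Real.sqrt (∑ k ∈ range (max f.natDegree g.natDegree + 1), (f.coeff k * s ^ k) ^ 2)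
        ^ g.natDegree *
      Real.sqrt (∑ k ∈ range (max f.natDegree g.natDegree + 1), (g.coeff k * s ^ k) ^ 2)
        ^ f.natDegree := by
  set m := f.natDegree with hmdef
  set n := g.natDegree with hndef
  set N := m + n with hNdef
  set D := max m n with hDdef
  set μ := min m n with hμdef
  have hsne : s ≠ 0 := ne_of_gt hs
  set U := ∑ k ∈ range (D + 1), (f.coeff k * s ^ k) ^ 2 with hUdef
  set V := ∑ k ∈ range (D + 1), (g.coeff k * s ^ k) ^ 2 with hVdef
  set W := ∑ k ∈ range (D + 1), (f.coeff k * s ^ k) * (g.coeff k * s ^ k) with hWdef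
  set u : ℕ → ℝ := fun k => f.coeff k * s ^ k with hudef
  set v : ℕ → ℝ := fun k => g.coeff k * s ^ k with hvdef
  have hUu : ∑ k ∈ range (D + 1), u k ^ 2 = U := by rw [hUdef]
  have hVv : ∑ k ∈ range (D + 1), v k ^ 2 = V := by rw [hVdef]
  have hWuv : ∑ k ∈ range (D + 1), u k * v k = W := by rw [hWdef]
  -- the scaled matrix
  set M : Matrix (Fin N) (Fin N) ℝ := Matrix.of fun i c =>
    (if (i : ℕ) < n then s ^ ((i : ℕ) + m) else s ^ (i : ℕ)) * _root_.sylvester f g i c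
      * (s ^ (c : ℕ))⁻¹ with hMdef
  -- determinant relation
  have hMdet : M.det = s ^ (m * n) * (_root_.sylvester f g).det := by
    have hfact : M = Matrix.diagonal (fun i : Fin N =>
        if (i : ℕ) < n then s ^ ((i : ℕ) + m) else s ^ (i : ℕ)) *
        (_root_.sylvester f g * Matrix.diagonal (fun c : Fin N => (s ^ (c : ℕ))⁻¹)) := by
      ext i c
      simp only [hMdef, Matrix.of_apply, Matrix.diagonal_mul, Matrix.mul_diagonal]
      ring
    rw [hfact, Matrix.det_mul, Matrix.det_mul, Matrix.det_diagonal, Matrix.det_diagonal]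
    have hkey : (∏ i : Fin N, (if (i : ℕ) < n then s ^ ((i : ℕ) + m) else s ^ (i : ℕ))) *
        (∏ c : Fin N, (s ^ (c : ℕ))⁻¹) = s ^ (m * n) := by
      rw [← Finset.prod_mul_distrib]
      have : ∀ i : Fin N,
          (if (i : ℕ) < n then s ^ ((i : ℕ) + m) else s ^ (i : ℕ)) * (s ^ (i : ℕ))⁻¹
            = if (i : ℕ) < n then s ^ m else 1 := by
        intro i
        by_cases h : (i : ℕ) < n
        · rw [if_pos h, if_pos h, pow_add]
          field_simp
        · rw [if_neg h, if_neg h]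
          field_simp
      rw [Finset.prod_congr rfl (fun i _ => this i), Finset.prod_ite, Finset.prod_const,
        Finset.prod_const, one_pow, mul_one]
      rw [show ((univ : Finset (Fin N)).filter fun i : Fin N => (i : ℕ) < n).card = n from
        card_filter_lt m n, ← pow_mul]
    calc (∏ i : Fin N, (if (i : ℕ) < n then s ^ ((i : ℕ) + m) else s ^ (i : ℕ))) *
          ((_root_.sylvester f g).det * ∏ c : Fin N, (s ^ (c : ℕ))⁻¹)
        = ((∏ i : Fin N, (if (i : ℕ) < n then s ^ ((i : ℕ) + m) else s ^ (i : ℕ))) *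
          (∏ c : Fin N, (s ^ (c : ℕ))⁻¹)) * (_root_.sylvester f g).det := by ring
      _ = s ^ (m * n) * (_root_.sylvester f g).det := by rw [hkey]
  -- entry formulas
  have hMf : ∀ i c : Fin N, (i : ℕ) < n →
      M i c = if (i : ℕ) ≤ (c : ℕ) ∧ (c : ℕ) ≤ (i : ℕ) + m
        then u (m + (i : ℕ) - (c : ℕ)) else 0 := by
    intro i c hi
    have hi' : (i : ℕ) < g.natDegree := hndef ▸ hi
    simp only [hMdef, Matrix.of_apply, _root_.sylvester, if_pos hi, if_pos hi', ← hmdef, ← hndef]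
    by_cases h : (i : ℕ) ≤ (c : ℕ) ∧ (c : ℕ) ≤ (i : ℕ) + m
    · rw [if_pos h, if_pos h]
      rw [show m - ((c : ℕ) - (i : ℕ)) = m + (i : ℕ) - (c : ℕ) from by omega]
      rw [hudef]
      have hpow : s ^ ((i : ℕ) + m) = s ^ (m + (i : ℕ) - (c : ℕ)) * s ^ (c : ℕ) := by
        rw [← pow_add]; congr 1; omega
      rw [hpow]
      field_simp
    · rw [if_neg h, if_neg h, mul_zero, zero_mul]
  have hMg : ∀ i c : Fin N, n ≤ (i : ℕ) →
      M i c = if (i : ℕ) - n ≤ (c : ℕ) ∧ (c : ℕ) ≤ (i : ℕ)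
        then v ((i : ℕ) - (c : ℕ)) else 0 := by
    intro i c hi
    have hi' : ¬ ((i : ℕ) < g.natDegree) := by rw [← hndef]; omega
    have hi2 : ¬ ((i : ℕ) < n) := by omega
    simp only [hMdef, Matrix.of_apply, _root_.sylvester, if_neg hi2, if_neg hi', ← hmdef, ← hndef]
    by_cases h : (i : ℕ) - n ≤ (c : ℕ) ∧ (c : ℕ) ≤ (i : ℕ)
    · rw [if_pos (show (i:ℕ) - n ≤ (c:ℕ) ∧ (c:ℕ) ≤ (i:ℕ) - n + n from ⟨h.1, by omega⟩),
        if_pos h]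
      rw [show n - ((c : ℕ) - ((i : ℕ) - n)) = (i : ℕ) - (c : ℕ) from by omega]
      rw [hvdef]
      have hpow : s ^ (i : ℕ) = s ^ ((i : ℕ) - (c : ℕ)) * s ^ (c : ℕ) := by
        rw [← pow_add]; congr 1; omega
      rw [hpow]
      field_simp
    · rw [if_neg (show ¬ ((i:ℕ) - n ≤ (c:ℕ) ∧ (c:ℕ) ≤ (i:ℕ) - n + n) from by omega),
        if_neg h, mul_zero, zero_mul]
  -- vanishing of coefficients
  have hu0 : ∀ k, m < k → u k = 0 := fun k hk => by
    simp [hudef, Polynomial.coeff_eq_zero_of_natDegree_lt hk]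
  have hv0 : ∀ k, n < k → v k = 0 := fun k hk => by
    simp [hvdef, Polynomial.coeff_eq_zero_of_natDegree_lt hk]
  -- row sums
  have hrowf : ∀ i : Fin N, (i : ℕ) < n → ∑ c, M i c ^ 2 = U := by
    intro i hi
    have h1 : ∑ c, M i c ^ 2 = ∑ c : Fin N,
        (if (i : ℕ) ≤ (c : ℕ) ∧ (c : ℕ) ≤ (i : ℕ) + m
          then (fun k => u k ^ 2) ((i : ℕ) + m - (c : ℕ)) else 0) := by
      apply Finset.sum_congr rfl
      intro c _
      rw [hMf i c hi]
      by_cases h : (i : ℕ) ≤ (c : ℕ) ∧ (c : ℕ) ≤ (i : ℕ) + m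
      · rw [if_pos h, if_pos h, show (i : ℕ) + m - (c : ℕ) = m + (i : ℕ) - (c : ℕ) from by omega]
      · rw [if_neg h, if_neg h]; ring
    rw [h1, window_sum (fun k => u k ^ 2) (i : ℕ) ((i : ℕ) + m) (by omega)
      (by have := i.isLt; omega)]
    rw [show (i : ℕ) + m - (i : ℕ) + 1 = m + 1 from by omega, ← hUu]
    apply Finset.sum_subset (by apply Finset.range_subset_range.mpr; omega)
    intro k hk hnk
    simp only [mem_range] at hk hnk
    rw [hu0 k (by omega)]
    ring
  have hrowg : ∀ i : Fin N, n ≤ (i : ℕ) → ∑ c, M i c ^ 2 = V := by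
    intro i hi
    have h1 : ∑ c, M i c ^ 2 = ∑ c : Fin N,
        (if (i : ℕ) - n ≤ (c : ℕ) ∧ (c : ℕ) ≤ (i : ℕ)
          then (fun k => v k ^ 2) ((i : ℕ) - (c : ℕ)) else 0) := by
      apply Finset.sum_congr rfl
      intro c _
      rw [hMg i c hi]
      by_cases h : (i : ℕ) - n ≤ (c : ℕ) ∧ (c : ℕ) ≤ (i : ℕ)
      · rw [if_pos h, if_pos h]
      · rw [if_neg h, if_neg h]; ring
    rw [h1, window_sum (fun k => v k ^ 2) ((i : ℕ) - n) (i : ℕ) (by omega) i.isLt]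
    rw [show (i : ℕ) - ((i : ℕ) - n) + 1 = n + 1 from by omega, ← hVv]
    apply Finset.sum_subset (by apply Finset.range_subset_range.mpr; omega)
    intro k hk hnk
    simp only [mem_range] at hk hnk
    rw [hv0 k (by omega)]
    ring
  have hp_lt : ∀ i : Fin N, D ≤ (i : ℕ) → (i : ℕ) - m < N := fun i _ => by omega
  have hrowp : ∀ (i : Fin N) (hD : D ≤ (i : ℕ)),
      ∑ c, M i c * M ⟨(i : ℕ) - m, hp_lt i hD⟩ c = W := by
    intro i hD
    set p : Fin N := ⟨(i : ℕ) - m, hp_lt i hD⟩ with hpdef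
    have hiN : (i : ℕ) < N := i.isLt
    have hpv : (p : ℕ) = (i : ℕ) - m := rfl
    have hpn : (p : ℕ) < n := by omega
    have h1 : ∑ c, M i c * M p c = ∑ c : Fin N,
        (if (i : ℕ) - μ ≤ (c : ℕ) ∧ (c : ℕ) ≤ (i : ℕ)
          then (fun k => u k * v k) ((i : ℕ) - (c : ℕ)) else 0) := by
      apply Finset.sum_congr rfl
      intro c _
      rw [hMg i c (by omega), hMf p c hpn]
      split_ifs with h1 h2 h3 <;>
        first
          | (exfalso; omega)
          | (rw [show m + (p : ℕ) - (c : ℕ) = (i : ℕ) - (c : ℕ) from by omega]; ring)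
          | ring
    rw [h1, window_sum (fun k => u k * v k) ((i : ℕ) - μ) (i : ℕ) (by omega) i.isLt]
    rw [show (i : ℕ) - ((i : ℕ) - μ) + 1 = μ + 1 from by omega, ← hWuv]
    apply Finset.sum_subset (by apply Finset.range_subset_range.mpr; omega)
    intro k hk hnk
    simp only [mem_range] at hk hnk
    have hk2 : m < k ∨ n < k := by omega
    rcases hk2 with hk2 | hk2
    · rw [hu0 k hk2, zero_mul]
    · rw [hv0 k hk2, mul_zero]
  -- positivity
  have hfne : f ≠ 0 := by
    intro h
    have hf' : 0 < f.natDegree := hmdef ▸ hf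
    rw [h, Polynomial.natDegree_zero] at hf'; exact lt_irrefl 0 hf'
  have hgne : g ≠ 0 := by
    intro h
    have hg' : 0 < g.natDegree := hndef ▸ hg
    rw [h, Polynomial.natDegree_zero] at hg'; exact lt_irrefl 0 hg'
  have ham : f.coeff m ≠ 0 := by
    rw [hmdef]; exact Polynomial.leadingCoeff_ne_zero.mpr hfne
  have hbn : g.coeff n ≠ 0 := by
    rw [hndef]; exact Polynomial.leadingCoeff_ne_zero.mpr hgne
  have hU : 0 < U := by
    apply Finset.sum_pos' (fun k _ => sq_nonneg _)
    refine ⟨m, by simp [hDdef], ?_⟩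
    have : u m ≠ 0 := mul_ne_zero ham (pow_ne_zero _ hsne)
    exact lt_of_le_of_ne (sq_nonneg _) (Ne.symm (pow_ne_zero 2 this))
  have hV : 0 < V := by
    apply Finset.sum_pos' (fun k _ => sq_nonneg _)
    refine ⟨n, by simp [hDdef], ?_⟩
    have : v n ≠ 0 := mul_ne_zero hbn (pow_ne_zero _ hsne)
    exact lt_of_le_of_ne (sq_nonneg _) (Ne.symm (pow_ne_zero 2 this))
  have hCS : W ^ 2 ≤ U * V := by
    rw [← hUu, ← hVv, ← hWuv]
    exact Finset.sum_mul_sq_le_sq_mul_sq _ u v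
  classical
  set P : Fin N → Prop := fun i => D ≤ (i : ℕ) with hPdef
  set pmap : Fin N → Fin N := fun i =>
    if h : D ≤ (i : ℕ) then ⟨(i : ℕ) - m, hp_lt i h⟩ else i with hpmapdef
  set M' : Matrix (Fin N) (Fin N) ℝ := Matrix.of fun i j =>
    if P i then M i j - (W / U) * M (pmap i) j else M i j with hM'def
  have hplt : ∀ i, P i → pmap i < i := by
    intro i hPi
    have hDi : D ≤ (i : ℕ) := hPi
    have hval : (pmap i : ℕ) = (i : ℕ) - m := by
      rw [hpmapdef]; simp only [dif_pos hDi]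
    rw [Fin.lt_def, hval]
    omega
  have hdet' : M'.det = M.det := det_rowop M P pmap (fun _ => W / U) hplt
  have hrow' : ∀ i : Fin N, ∑ c, M' i c ^ 2 =
      if (i : ℕ) < n then U else if (i : ℕ) < D then V else V - W ^ 2 / U := by
    intro i
    by_cases h1 : (i : ℕ) < n
    · have hPi : ¬ P i := by simp only [hPdef]; omega
      rw [if_pos h1]
      rw [show ∑ c, M' i c ^ 2 = ∑ c, M i c ^ 2 from
        Finset.sum_congr rfl fun c _ => by
          rw [hM'def]; simp only [Matrix.of_apply, if_neg hPi]]
      exact hrowf i h1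
    · by_cases h2 : (i : ℕ) < D
      · have hPi : ¬ P i := by simp only [hPdef]; omega
        rw [if_neg h1, if_pos h2]
        rw [show ∑ c, M' i c ^ 2 = ∑ c, M i c ^ 2 from
          Finset.sum_congr rfl fun c _ => by
            rw [hM'def]; simp only [Matrix.of_apply, if_neg hPi]]
        exact hrowg i (by omega)
      · have hDi : D ≤ (i : ℕ) := by omega
        have hPi : P i := by simp only [hPdef]; omega
        have hpm : pmap i = ⟨(i : ℕ) - m, hp_lt i hDi⟩ := by
          rw [hpmapdef]; simp only [dif_pos hDi]
        rw [if_neg h1, if_neg h2]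
        have hexp : ∀ c, M' i c ^ 2 = M i c ^ 2
            - 2 * (W / U) * (M i c * M (pmap i) c) + (W / U) ^ 2 * M (pmap i) c ^ 2 := by
          intro c
          rw [hM'def]; simp only [Matrix.of_apply, if_pos hPi]; ring
        rw [Finset.sum_congr rfl fun c _ => hexp c, Finset.sum_add_distrib,
          Finset.sum_sub_distrib, ← Finset.mul_sum, ← Finset.mul_sum]
        have hmem : ((⟨(i : ℕ) - m, hp_lt i hDi⟩ : Fin N) : ℕ) < n := by
          have := i.isLt
          simp only []
          omega
        rw [hpm, hrowg i (by omega), hrowp i hDi, hrowf ⟨(i : ℕ) - m, hp_lt i hDi⟩ hmem]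
        field_simp
        ring
  set r : ℕ → ℝ := fun k => if k < n then Real.sqrt U else if k < D then Real.sqrt V
    else Real.sqrt (V - W ^ 2 / U) with hrdef
  have hprod : (∏ i : Fin N, Real.sqrt (∑ c, M' i c ^ 2))
      = Real.sqrt U ^ n * Real.sqrt V ^ (D - n) * Real.sqrt (V - W ^ 2 / U) ^ (N - D) := by
    have step1 : (∏ i : Fin N, Real.sqrt (∑ c, M' i c ^ 2)) = ∏ k ∈ range N, r k := by
      rw [← Fin.prod_univ_eq_prod_range (fun k => r k) N]
      apply Finset.prod_congr rfl
      intro i _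
      rw [hrow' i]
      simp only [hrdef]
      split_ifs <;> rfl
    rw [step1, Finset.range_eq_Ico,
      ← Finset.prod_Ico_consecutive r (Nat.zero_le D) (show D ≤ N by omega),
      ← Finset.prod_Ico_consecutive r (Nat.zero_le n) (show n ≤ D by omega)]
    have e1 : ∏ k ∈ Finset.Ico 0 n, r k = Real.sqrt U ^ n := by
      have h : ∀ k ∈ Finset.Ico 0 n, r k = Real.sqrt U := by
        intro k hk
        simp only [Finset.mem_Ico] at hk
        simp only [hrdef]
        rw [if_pos hk.2]
      rw [Finset.prod_congr rfl h, Finset.prod_const, Nat.card_Ico, Nat.sub_zero]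
    have e2 : ∏ k ∈ Finset.Ico n D, r k = Real.sqrt V ^ (D - n) := by
      have h : ∀ k ∈ Finset.Ico n D, r k = Real.sqrt V := by
        intro k hk
        simp only [Finset.mem_Ico] at hk
        simp only [hrdef]
        rw [if_neg (by omega), if_pos hk.2]
      rw [Finset.prod_congr rfl h, Finset.prod_const, Nat.card_Ico]
    have e3 : ∏ k ∈ Finset.Ico D N, r k = Real.sqrt (V - W ^ 2 / U) ^ (N - D) := by
      have h : ∀ k ∈ Finset.Ico D N, r k = Real.sqrt (V - W ^ 2 / U) := by
        intro k hk
        simp only [Finset.mem_Ico] at hk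
        simp only [hrdef]
        rw [if_neg (by omega), if_neg (by omega)]
      rw [Finset.prod_congr rfl h, Finset.prod_const, Nat.card_Ico]
    rw [e1, e2, e3]
  have habs : |M'.det| = |(_root_.sylvester f g).det| * s ^ (m * n) := by
    rw [hdet', hMdet, abs_mul, abs_of_pos (pow_pos hs (m * n))]
    ring
  have hchain := hadamard_ineq M'
  rw [habs, hprod] at hchain
  refine le_trans hchain (le_of_eq ?_)
  have hVW : V - W ^ 2 / U = V * (1 - W ^ 2 / (U * V)) := by
    field_simp
  have hsplit : Real.sqrt (V - W ^ 2 / U)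
      = Real.sqrt V * Real.sqrt (1 - W ^ 2 / (U * V)) := by
    rw [hVW, Real.sqrt_mul hV.le]
  rw [hsplit, mul_pow]
  have hND : N - D = μ := by omega
  have hDn : D - n + μ = m := by omega
  rw [hND]
  calc Real.sqrt U ^ n * Real.sqrt V ^ (D - n) *
        (Real.sqrt V ^ μ * Real.sqrt (1 - W ^ 2 / (U * V)) ^ μ)
      = Real.sqrt (1 - W ^ 2 / (U * V)) ^ μ * Real.sqrt U ^ n *
        (Real.sqrt V ^ (D - n) * Real.sqrt V ^ μ) := by ring
    _ = Real.sqrt (1 - W ^ 2 / (U * V)) ^ μ * Real.sqrt U ^ n * Real.sqrt V ^ m := by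
        rw [← pow_add, hDn]

/-- The skewed resultant bound:  for non-constant real polynomials `f` and `g` of degrees
`m` and `n`, `|Res(f,g)| ≤ |sin θ_s|^{min(m,n)} · ‖f‖_{2,s}ⁿ · ‖g‖_{2,s}ᵐ` for all `s > 0`. -/
theorem skewed_resultant_bound (f g : Polynomial ℝ)
    (hf : 0 < f.natDegree) (hg : 0 < g.natDegree) :
    ∀ s : ℝ, 0 < s →
      |_root_.resultant f g| ≤ sinTheta f g s ^ min f.natDegree g.natDegree *
        skewNorm f s ^ g.natDegree * skewNorm g s ^ f.natDegree := by
  intro s hs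
  have key := skew_aux f g hf hg s hs
  set m := f.natDegree with hm
  set n := g.natDegree with hn
  set D := max m n with hD
  set U := ∑ k ∈ range (D + 1), (f.coeff k * s ^ k) ^ 2 with hU
  set V := ∑ k ∈ range (D + 1), (g.coeff k * s ^ k) ^ 2 with hV
  set W := ∑ k ∈ range (D + 1), (f.coeff k * s ^ k) * (g.coeff k * s ^ k) with hW
  have hA : sinTheta f g s = Real.sqrt (1 - W ^ 2 / (U * V)) := by
    have h0 : sinTheta f g s = Real.sqrt (1 -
        (∑ i : Fin (D + 1), (f.coeff (i : ℕ) * s ^ (i : ℕ)) * (g.coeff (i : ℕ) * s ^ (i : ℕ))) ^ 2 /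
        ((∑ i : Fin (D + 1), (f.coeff (i : ℕ) * s ^ (i : ℕ)) ^ 2) *
         (∑ i : Fin (D + 1), (g.coeff (i : ℕ) * s ^ (i : ℕ)) ^ 2))) := rfl
    rw [h0,
      Fin.sum_univ_eq_sum_range (fun k => (f.coeff k * s ^ k) * (g.coeff k * s ^ k)) (D + 1),
      Fin.sum_univ_eq_sum_range (fun k => (f.coeff k * s ^ k) ^ 2) (D + 1),
      Fin.sum_univ_eq_sum_range (fun k => (g.coeff k * s ^ k) ^ 2) (D + 1),
      ← hU, ← hV, ← hW]
  have hcf : ∀ k, m < k → f.coeff k = 0 := fun k hk =>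
    Polynomial.coeff_eq_zero_of_natDegree_lt (hm ▸ hk)
  have hcg : ∀ k, n < k → g.coeff k = 0 := fun k hk =>
    Polynomial.coeff_eq_zero_of_natDegree_lt (hn ▸ hk)
  have hUeq : ∑ k ∈ range (m + 1), (f.coeff k * s ^ k) ^ 2 = U := by
    rw [hU]
    apply Finset.sum_subset (Finset.range_subset_range.mpr (by omega))
    intro k hk hnk
    simp only [mem_range] at hk hnk
    rw [hcf k (by omega)]
    ring
  have hVeq : ∑ k ∈ range (n + 1), (g.coeff k * s ^ k) ^ 2 = V := by
    rw [hV]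
    apply Finset.sum_subset (Finset.range_subset_range.mpr (by omega))
    intro k hk hnk
    simp only [mem_range] at hk hnk
    rw [hcg k (by omega)]
    ring
  have hterm : ∀ (d : ℕ) (a : ℝ) (i : ℕ),
      a ^ 2 * s ^ (2 * (i : ℝ) - (d : ℝ)) * s ^ d = (a * s ^ i) ^ 2 := by
    intro d a i
    have hp : (s : ℝ) ^ (2 * (i : ℝ) - (d : ℝ)) * s ^ d = (s ^ i) ^ 2 := by
      rw [← Real.rpow_natCast s d, ← Real.rpow_add hs,
        show 2 * (i : ℝ) - (d : ℝ) + (d : ℝ) = ((2 * i : ℕ) : ℝ) by push_cast; ring,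
        Real.rpow_natCast, pow_mul']
    calc a ^ 2 * s ^ (2 * (i : ℝ) - (d : ℝ)) * s ^ d
        = a ^ 2 * ((s : ℝ) ^ (2 * (i : ℝ) - (d : ℝ)) * s ^ d) := by ring
      _ = a ^ 2 * (s ^ i) ^ 2 := by rw [hp]
      _ = (a * s ^ i) ^ 2 := by ring
  have hB : skewNorm f s * Real.sqrt (s ^ m) = Real.sqrt U := by
    simp only [skewNorm, ← hm]
    have hXnn : 0 ≤ ∑ i ∈ range (m + 1), f.coeff i ^ 2 * s ^ (2 * (i : ℝ) - (m : ℝ)) :=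
      Finset.sum_nonneg fun i _ => mul_nonneg (sq_nonneg _) (Real.rpow_nonneg hs.le _)
    rw [← Real.sqrt_mul hXnn (s ^ m)]
    congr 1
    rw [Finset.sum_mul, ← hUeq]
    exact Finset.sum_congr rfl fun i _ => hterm m (f.coeff i) i
  have hC : skewNorm g s * Real.sqrt (s ^ n) = Real.sqrt V := by
    simp only [skewNorm, ← hn]
    have hXnn : 0 ≤ ∑ i ∈ range (n + 1), g.coeff i ^ 2 * s ^ (2 * (i : ℝ) - (n : ℝ)) :=
      Finset.sum_nonneg fun i _ => mul_nonneg (sq_nonneg _) (Real.rpow_nonneg hs.le _)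
    rw [← Real.sqrt_mul hXnn (s ^ n)]
    congr 1
    rw [Finset.sum_mul, ← hVeq]
    exact Finset.sum_congr rfl fun i _ => hterm n (g.coeff i) i
  have hD1 : ∀ (a b : ℕ), (Real.sqrt (s ^ a)) ^ b = Real.sqrt ((s ^ a) ^ b) := by
    intro a b
    rw [← Real.sqrt_sq (pow_nonneg (Real.sqrt_nonneg _) b)]
    congr 1
    rw [← pow_mul, mul_comm b 2, pow_mul, Real.sq_sqrt (pow_nonneg hs.le a)]
  have hDprod : (Real.sqrt (s ^ m)) ^ n * (Real.sqrt (s ^ n)) ^ m = s ^ (m * n) := by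
    rw [hD1 m n, hD1 n m, ← Real.sqrt_mul (by positivity)]
    rw [show (s ^ m) ^ n * (s ^ n) ^ m = (s ^ (m * n)) ^ 2 by
      rw [← pow_mul, ← pow_mul, ← pow_add, ← pow_mul]; congr 1; ring]
    exact Real.sqrt_sq (by positivity)
  show |_root_.resultant f g| ≤ sinTheta f g s ^ min m n * skewNorm f s ^ n * skewNorm g s ^ m
  have hres : _root_.resultant f g = (_root_.sylvester f g).det := rfl
  rw [hres]
  refine le_of_mul_le_mul_right ?_ (pow_pos hs (m * n))
  refine le_trans key (le_of_eq ?_)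
  rw [hA, ← hB, ← hC, ← hDprod]
  ring
end

section
/- Let H be a positive definite Hermitian matrix partitioned in block form H = [[H₁, X], [X*, H₂]] where H₁ and H₂ are square. Then det H ≤ det H₁ · det H₂, with equality if and only if X = 0. -/
open Matrix
open scoped ComplexOrder

lemma det_one_add_posSemidef {k : Type*} [Fintype k] [DecidableEq k]
    {Q : Matrix k k ℂ} (hQ : Q.PosSemidef) :
    1 ≤ (1 + Q).det ∧ ((1 + Q).det = 1 ↔ Q = 0) := by
  have hH := hQ.isHermitian
  set U : Matrix k k ℂ := (hH.eigenvectorUnitary : Matrix k k ℂ) with hU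
  have hUU : U * star U = 1 := (Matrix.mem_unitaryGroup_iff).mp hH.eigenvectorUnitary.2
  set d : k → ℝ := hH.eigenvalues with hd
  have hQeq : Q = U * diagonal (RCLike.ofReal ∘ d) * star U := hH.spectral_theorem
  have key : 1 + Q = U * (1 + diagonal (RCLike.ofReal ∘ d)) * star U := by
    rw [Matrix.mul_add, Matrix.add_mul, Matrix.mul_one, hUU, ← hQeq]
  have hdiag : (1 : Matrix k k ℂ) + diagonal (RCLike.ofReal ∘ d)
      = diagonal (fun i => 1 + (d i : ℂ)) := by
    rw [← diagonal_one, diagonal_add]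
    rfl
  have hdet : (1 + Q).det = ∏ i, (1 + (d i : ℂ)) := by
    rw [key, det_mul_right_comm, hUU, one_mul, hdiag, det_diagonal]
  have hdnn : ∀ i, 0 ≤ d i := hQ.eigenvalues_nonneg
  have hprod : (1 + Q).det = ((∏ i, (1 + d i) : ℝ) : ℂ) := by
    rw [hdet]; push_cast; rfl
  have hone_le : (1:ℝ) ≤ ∏ i, (1 + d i) := by
    have := Finset.prod_le_prod (s := Finset.univ) (f := fun _ : k => (1:ℝ))
      (g := fun i => 1 + d i) (fun i _ => zero_le_one) (fun i _ => by linarith [hdnn i])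
    simpa using this
  constructor
  · rw [hprod]
    exact_mod_cast hone_le
  · constructor
    · intro h
      rw [hprod] at h
      have h' : (∏ i, (1 + d i) : ℝ) = 1 := by exact_mod_cast h
      have hd0 : ∀ i, d i = 0 := by
        intro i
        by_contra hne
        have hi : 1 < 1 + d i := by
          rcases lt_or_eq_of_le (hdnn i) with h1 | h1
          · linarith
          · exact absurd h1.symm hne
        have hlt : ∏ _i : k, (1:ℝ) < ∏ i, (1 + d i) :=
          Finset.prod_lt_prod (fun i _ => zero_lt_one) (fun i _ => by linarith [hdnn i])
            ⟨i, Finset.mem_univ i, by simpa using hi⟩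
        rw [Finset.prod_const_one, h'] at hlt
        exact lt_irrefl 1 hlt
      rw [hQeq]
      have : diagonal (RCLike.ofReal ∘ d) = (0 : Matrix k k ℂ) := by
        ext i j
        by_cases hij : i = j <;> simp [diagonal, hij, hd0]
      rw [this, Matrix.mul_zero, Matrix.zero_mul]
    · rintro rfl
      simp

open scoped MatrixOrder in
lemma det_le_det_add_posSemidef {k : Type*} [Fintype k] [DecidableEq k]
    {S P : Matrix k k ℂ} (hS : S.PosDef) (hP : P.PosSemidef) :
    S.det ≤ (S + P).det ∧ ((S + P).det = S.det ↔ P = 0) := by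
  set T := CFC.sqrt S with hTdef
  have hT : T.PosSemidef := (CFC.sqrt_nonneg S).posSemidef
  have hTT : T * T = S := CFC.sqrt_mul_sqrt_self S hS.posSemidef.nonneg
  have hdetS : IsUnit S.det := hS.det_pos.ne'.isUnit
  have hdetT : IsUnit T.det := by
    have : T.det * T.det = S.det := by rw [← det_mul, hTT]
    exact isUnit_of_mul_isUnit_left (this ▸ hdetS)
  have hTinv : T * T⁻¹ = 1 := mul_nonsing_inv T hdetT
  have hTinv' : T⁻¹ * T = 1 := nonsing_inv_mul T hdetT
  have hTinvH : (T⁻¹)ᴴ = T⁻¹ := by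
    rw [conjTranspose_nonsing_inv, hT.isHermitian.eq]
  set Q := T⁻¹ * P * T⁻¹ with hQdef
  have hQ : Q.PosSemidef := by
    have := hP.mul_mul_conjTranspose_same T⁻¹
    rwa [hTinvH] at this
  have hdecomp : S + P = T * (1 + Q) * T := by
    rw [Matrix.mul_add, Matrix.mul_one, Matrix.add_mul, hTT, hQdef]
    congr 1
    rw [← Matrix.mul_assoc, ← Matrix.mul_assoc, hTinv, Matrix.one_mul, Matrix.mul_assoc,
      hTinv', Matrix.mul_one]
  have hPTQT : P = T * Q * T := by
    rw [hQdef, ← Matrix.mul_assoc, ← Matrix.mul_assoc, hTinv, Matrix.one_mul,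
      Matrix.mul_assoc, hTinv', Matrix.mul_one]
  have hdet : (S + P).det = S.det * (1 + Q).det := by
    rw [hdecomp, det_mul, det_mul, mul_comm _ ((1+Q).det), mul_assoc, ← det_mul, hTT,
      mul_comm]
  obtain ⟨h1, h2⟩ := det_one_add_posSemidef hQ
  constructor
  · calc S.det = S.det * 1 := (mul_one _).symm
    _ ≤ S.det * (1 + Q).det := mul_le_mul_of_nonneg_left h1 hS.det_pos.le
    _ = (S + P).det := hdet.symm
  · rw [hdet]
    constructor
    · intro h
      have : (1 + Q).det = 1 :=
        mul_left_cancel₀ hdetS.ne_zero (by rw [h, mul_one])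
      rw [hPTQT, h2.mp this, Matrix.mul_zero, Matrix.zero_mul]
    · intro hP0
      have hQ0 : Q = 0 := by rw [hQdef, hP0, Matrix.mul_zero, Matrix.zero_mul]
      rw [h2.mpr hQ0, mul_one]

/-- Fischer's inequality: if `H` is a positive definite Hermitian matrix partitioned in the
block form `H = [[H₁, X], [X*, H₂]]` with `H₁` and `H₂` square, then
`det H ≤ det H₁ · det H₂`, with equality if and only if `X = 0`.  (The determinants are real
and positive; the inequality is stated using the complex order.) -/
theorem fischer_inequality {m n : ℕ}
    (H : Matrix (Fin m ⊕ Fin n) (Fin m ⊕ Fin n) ℂ) (hH : H.PosDef) :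
    H.det ≤ H.toBlocks₁₁.det * H.toBlocks₂₂.det ∧
    (H.det = H.toBlocks₁₁.det * H.toBlocks₂₂.det ↔ H.toBlocks₁₂ = 0) := by
  set A := H.toBlocks₁₁ with hAdef
  set B := H.toBlocks₁₂ with hBdef
  set D := H.toBlocks₂₂ with hDdef
  have hC : H.toBlocks₂₁ = Bᴴ := by
    ext i j
    exact (hH.isHermitian.apply _ _).symm
  have hHB : H = fromBlocks A B Bᴴ D := by
    rw [← hC, fromBlocks_toBlocks]
  -- A is positive definite
  have hA : A.PosDef := by
    refine posDef_iff_dotProduct_mulVec.mpr ⟨?_, ?_⟩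
    · ext i j
      exact hH.isHermitian.apply _ _
    · intro x hx
      have hy : (Sum.elim x (0 : Fin n → ℂ)) ≠ 0 := by
        intro h
        apply hx
        ext i
        exact congrFun h (Sum.inl i)
      have := hH.dotProduct_mulVec_pos hy
      rw [hHB] at this
      simpa [fromBlocks_mulVec, Function.star_sumElim] using this
  haveI : Invertible A := A.invertibleOfIsUnitDet hA.det_pos.ne'.isUnit
  set S := D - Bᴴ * A⁻¹ * B with hSdef
  set P := Bᴴ * A⁻¹ * B with hPdef
  have hSP : S + P = D := sub_add_cancel D P
  -- S is positive definite
  have hS : S.PosDef := by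
    refine posDef_iff_dotProduct_mulVec.mpr ⟨?_, ?_⟩
    · exact (IsHermitian.fromBlocks₁₁ B D hA.1).mp (hHB ▸ hH.isHermitian)
    · intro x hx
      have hy : (Sum.elim (-((A⁻¹ * B) *ᵥ x)) x) ≠ 0 := by
        intro h
        apply hx
        ext i
        exact congrFun h (Sum.inr i)
      have h0 := hH.dotProduct_mulVec_pos hy
      rw [hHB, dotProduct_mulVec, schur_complement_eq₁₁ B D _ _ hA.1, neg_add_cancel,
        dotProduct_zero, zero_add, ← dotProduct_mulVec] at h0
      exact h0
  -- P is positive semidefinite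
  have hP : P.PosSemidef := hA.inv.posSemidef.conjTranspose_mul_mul_same B
  -- determinant formula
  have hdetH : H.det = A.det * S.det := by
    rw [hHB, det_fromBlocks₁₁, invOf_eq_nonsing_inv]
  obtain ⟨hle, heq⟩ := det_le_det_add_posSemidef hS hP
  rw [hSP] at hle heq
  have hP0B : P = 0 ↔ B = 0 := by
    constructor
    · intro h
      have hBv : ∀ x, B *ᵥ x = 0 := by
        intro x
        by_contra hBx
        have hpos := hA.inv.dotProduct_mulVec_pos hBx
        have : star x ⬝ᵥ P *ᵥ x = star (B *ᵥ x) ⬝ᵥ A⁻¹ *ᵥ (B *ᵥ x) := by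
          rw [hPdef, ← mulVec_mulVec, ← mulVec_mulVec, dotProduct_mulVec (star x),
            ← star_mulVec]
        rw [h] at this
        simp only [zero_mulVec, dotProduct_zero] at this
        rw [← this] at hpos
        exact lt_irrefl 0 hpos
      ext i j
      have := congrFun (hBv (Pi.single j 1)) i
      simpa using this
    · intro hB0
      rw [hPdef, hB0]
      simp
  constructor
  · calc H.det = A.det * S.det := hdetH
    _ ≤ A.det * D.det := mul_le_mul_of_nonneg_left hle hA.det_pos.le
  · rw [hdetH]
    constructor
    · intro h
      have hSDdet : S.det = D.det := mul_left_cancel₀ hA.det_pos.ne' h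
      exact hP0B.mp (heq.mp hSDdet.symm)
    · intro hB0
      rw [heq.mpr (hP0B.mpr hB0)]
end

section
/- Let d ≥ 2. A sequence [c₀,…,c_d] of integers is a geometric progression modulo N with: (i) all terms nonzero, (ii) gcd(c₀,N)=1, (iii) [c₀,…,c_{d−1}] a rational geometric progression, and (iv) [c₀,…,c_d] not a rational geometric progression, if and only if there exist nonzero integers a, p, m, k with gcd(m,p)=1, gcd(ap,N)=1, (a m^d − kN)/p a nonzero integer, and [c₀,…,c_d] = [a p^{d−1}, a p^{d−2} m, …, a m^{d−1}, (a m^d − kN)/p]. -/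
set_option maxHeartbeats 1000000

open Finset

/-- Theorem 4.1: for `d ≥ 2`, a sequence `[c₀,…,c_d]` of integers is a geometric progression
modulo `N` (with some ratio `u/v`, `gcd(v,N)=1`) such that (i) all terms are nonzero,
(ii) `gcd(c₀,N)=1`, (iii) `[c₀,…,c_{d−1}]` is a rational geometric progression, and
(iv) `[c₀,…,c_d]` is not a rational geometric progression, if and only if there exist
nonzero integers `a, p, m, k` with `gcd(m,p)=1`, `gcd(ap,N)=1`, `(a m^d − kN)/p` a nonzero
integer, and `[c₀,…,c_d] = [a p^{d−1}, a p^{d−2} m, …, a m^{d−1}, (a m^d − kN)/p]`. -/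
theorem gp_classification (d : ℕ) (hd : 2 ≤ d) (N : ℕ) (hN : 0 < N)
    (c : Fin (d + 1) → ℤ) :
    ((∃ u v : ℤ, Int.gcd v N = 1 ∧
        ∀ i : ℕ, ∀ h : i < d,
          (N : ℤ) ∣ (v * c ⟨i + 1, by omega⟩ - u * c ⟨i, by omega⟩)) ∧
      (∀ i, c i ≠ 0) ∧
      Int.gcd (c 0) N = 1 ∧
      (∃ ρ : ℚ, ∀ i : ℕ, ∀ h : i + 1 < d,
          (c ⟨i + 1, by omega⟩ : ℚ) = ρ * (c ⟨i, by omega⟩ : ℚ)) ∧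
      ¬(∃ ρ : ℚ, ∀ i : ℕ, ∀ h : i < d,
          (c ⟨i + 1, by omega⟩ : ℚ) = ρ * (c ⟨i, by omega⟩ : ℚ)))
    ↔
    (∃ a p m k : ℤ, a ≠ 0 ∧ p ≠ 0 ∧ m ≠ 0 ∧ k ≠ 0 ∧
      Int.gcd m p = 1 ∧ Int.gcd (a * p) N = 1 ∧
      (∃ cd : ℤ, cd ≠ 0 ∧ a * m ^ d - k * (N : ℤ) = p * cd ∧ c ⟨d, by omega⟩ = cd) ∧
      ∀ i : ℕ, ∀ h : i < d, c ⟨i, by omega⟩ = a * p ^ (d - 1 - i) * m ^ i) := by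
  obtain ⟨f, hf⟩ : ∃ f : ℕ → ℤ, ∀ (i : ℕ) (h : i < d + 1), c ⟨i, h⟩ = f i :=
    ⟨fun i => if h : i < d + 1 then c ⟨i, h⟩ else 0, fun i h => by simp [h]⟩
  have hc00 : c 0 = f 0 := hf 0 (Nat.succ_pos d)
  constructor
  · rintro ⟨⟨u, v, hv, hmod⟩, hnz, hc0, ⟨ρ, hρ⟩, hnot⟩
    simp only [hf] at hmod hρ
    have hnz' : ∀ i : ℕ, i < d + 1 → f i ≠ 0 := fun i h => (hf i h) ▸ hnz ⟨i, h⟩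
    rw [hc00] at hc0
    obtain ⟨m, hm_def⟩ : ∃ m : ℤ, ρ.num = m := ⟨_, rfl⟩
    obtain ⟨p, hp_def⟩ : ∃ p : ℤ, (ρ.den : ℤ) = p := ⟨_, rfl⟩
    have hp0 : 0 < p := by rw [← hp_def]; exact_mod_cast ρ.pos
    have hpQ : (p : ℚ) ≠ 0 := by positivity
    have hmρ : (m : ℚ) = ρ * p := by
      rw [← hm_def, ← hp_def]
      push_cast
      field_simp [Rat.num_div_den]
      exact (Rat.mul_den_eq_num ρ).symm
    have hcop : Int.gcd m p = 1 := by
      have h := ρ.reduced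
      rw [← hm_def, ← hp_def]
      simpa [Int.gcd] using h
    -- integer recurrence
    have R : ∀ i : ℕ, i + 1 < d → p * f (i + 1) = m * f i := by
      intro i h
      have h2 : (p : ℚ) * (f (i + 1) : ℚ) = (m : ℚ) * (f i : ℚ) := by
        rw [hρ i h, hmρ]; ring
      exact_mod_cast h2
    have A : ∀ i : ℕ, i < d → f i * p ^ i = f 0 * m ^ i := by
      intro i
      induction i with
      | zero => intro _; simp
      | succ n ih =>
        intro hi
        have hn : n < d := by omega
        calc f (n + 1) * p ^ (n + 1)
            = (p * f (n + 1)) * p ^ n := by ring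
          _ = (m * f n) * p ^ n := by rw [R n hi]
          _ = (f n * p ^ n) * m := by ring
          _ = (f 0 * m ^ n) * m := by rw [ih hn]
          _ = f 0 * m ^ (n + 1) := by ring
    have hcopmp : IsCoprime m p := Int.isCoprime_iff_gcd_eq_one.mpr hcop
    have hdvd : p ^ (d - 1) ∣ f 0 := by
      have h1 : p ^ (d - 1) ∣ f 0 * m ^ (d - 1) :=
        ⟨f (d - 1), by rw [← A (d - 1) (by omega)]; ring⟩
      exact (IsCoprime.pow hcopmp.symm).dvd_of_dvd_mul_right h1
    obtain ⟨a, ha_eq⟩ := hdvd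
    have hpne : p ≠ 0 := by omega
    have hform : ∀ i : ℕ, i < d → f i = a * p ^ (d - 1 - i) * m ^ i := by
      intro i hi
      have hp' : p ^ (d - 1 - i) * p ^ i = p ^ (d - 1) := by
        rw [← pow_add]; congr 1; omega
      have key : f i * p ^ i = (a * p ^ (d - 1 - i) * m ^ i) * p ^ i := by
        calc f i * p ^ i = f 0 * m ^ i := A i hi
          _ = (p ^ (d - 1) * a) * m ^ i := by rw [ha_eq]
          _ = ((p ^ (d - 1 - i) * p ^ i) * a) * m ^ i := by rw [hp']
          _ = (a * p ^ (d - 1 - i) * m ^ i) * p ^ i := by ring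
      exact mul_right_cancel₀ (pow_ne_zero i hpne) key
    have ha0 : a ≠ 0 := by
      intro h
      exact hnz' 0 (by omega) (by rw [ha_eq, h, mul_zero])
    have hm0 : m ≠ 0 := by
      intro h
      exact hnz' 1 (by omega) (by rw [hform 1 (by omega), h]; ring)
    -- coprimality
    have hc0' : IsCoprime (f 0) (N : ℤ) := Int.isCoprime_iff_gcd_eq_one.mpr hc0
    rw [ha_eq] at hc0'
    have haN : IsCoprime a (N : ℤ) := hc0'.of_mul_left_right
    have hpdN : IsCoprime (p ^ (d - 1)) (N : ℤ) := hc0'.of_mul_left_left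
    have hpN : IsCoprime p (N : ℤ) :=
      (IsCoprime.pow_left_iff (by omega)).mp hpdN
    have hapN : Int.gcd (a * p) N = 1 :=
      Int.isCoprime_iff_gcd_eq_one.mp (haN.mul_left hpN)
    -- step 1 of modular argument: N ∣ v*m - u*p
    have hmod0 := hmod 0 (by omega)
    have hc1 : f 1 = a * p ^ (d - 2) * m := by
      rw [hform 1 (by omega), pow_one]
      have e : d - 1 - 1 = d - 2 := by omega
      rw [e]
    have hc0e : f 0 = a * p ^ (d - 1) := by rw [ha_eq]; ring
    have hNvu : (N : ℤ) ∣ v * m - u * p := by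
      have heq : v * f (0 + 1) - u * f 0
          = (a * p ^ (d - 2)) * (v * m - u * p) := by
        have h01 : (0 : ℕ) + 1 = 1 := rfl
        rw [h01, hc1, hc0e]
        have hpp : p ^ (d - 1) = p ^ (d - 2) * p := by
          rw [← pow_succ]; congr 1; omega
        rw [hpp]; ring
      rw [heq] at hmod0
      have hcq : IsCoprime ((N : ℤ)) (a * p ^ (d - 2)) :=
        (haN.symm.mul_right (hpN.symm.pow_right))
      exact hcq.dvd_of_dvd_mul_left hmod0
    -- last term
    have hmodd := hmod (d - 1) (by omega)
    have hd1 : d - 1 + 1 = d := by omega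
    rw [hd1] at hmodd
    have hcdm1 : f (d - 1) = a * m ^ (d - 1) := by
      rw [hform (d - 1) (by omega)]
      have e : d - 1 - (d - 1) = 0 := by omega
      rw [e]; ring
    rw [hcdm1] at hmodd
    have hvN : IsCoprime (v : ℤ) (N : ℤ) := Int.isCoprime_iff_gcd_eq_one.mpr hv
    have hNbig : (N : ℤ) ∣ a * m ^ d - p * f d := by
      have hmm : m ^ d = m ^ (d - 1) * m := by rw [← pow_succ]; congr 1; omega
      have key : v * (a * m ^ d - p * f d)
          = a * m ^ (d - 1) * (v * m - u * p)
            - p * (v * f d - u * (a * m ^ (d - 1))) := by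
        rw [hmm]; ring
      have hdv : (N : ℤ) ∣ v * (a * m ^ d - p * f d) := by
        rw [key]
        exact dvd_sub (Dvd.dvd.mul_left hNvu _) (Dvd.dvd.mul_left hmodd _)
      exact hvN.symm.dvd_of_dvd_mul_left hdv
    obtain ⟨k, hk_eq⟩ := hNbig
    -- if the full sequence were a rational GP we'd contradict (iv)
    have hfull : p * f d = a * m ^ d → False := by
      intro hpc
      apply hnot
      refine ⟨ρ, ?_⟩
      intro i hi
      rw [hf (i + 1) (by omega), hf i (by omega)]
      by_cases h2 : i + 1 < d
      · exact hρ i h2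
      · have hi' : i = d - 1 := by omega
        subst hi'
        rw [hd1, hcdm1]
        have hmm : m ^ d = m ^ (d - 1) * m := by rw [← pow_succ]; congr 1; omega
        have hQ : (p : ℚ) * (f d : ℚ) = (p : ℚ) * (ρ * ((a : ℚ) * (m : ℚ) ^ (d - 1))) := by
          have h1 : (p : ℚ) * (f d : ℚ) = (a : ℚ) * (m : ℚ) ^ d := by exact_mod_cast hpc
          have hmmQ : (m : ℚ) ^ (d - 1) * (m : ℚ) = (m : ℚ) ^ d := by rw [← pow_succ, hd1]
          rw [h1, ← hmmQ, hmρ]; ring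
        have := mul_left_cancel₀ hpQ hQ
        rw [this]; push_cast; ring
    have hk0 : k ≠ 0 := by
      intro h
      rw [h, mul_zero, sub_eq_zero] at hk_eq
      exact hfull hk_eq.symm
    refine ⟨a, p, m, k, ha0, hpne, hm0, hk0, hcop, hapN,
      ⟨f d, hnz' d (by omega), by linear_combination hk_eq, hf d (by omega)⟩, ?_⟩
    intro i h
    rw [hf i (by omega)]
    exact hform i h
  · rintro ⟨a, p, m, k, ha, hp, hm, hk, hmp, hapN, ⟨cd, hcd0, hcdeq, hcd⟩, hform⟩
    simp only [hf] at hform hcd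
    have hcop : IsCoprime (a * p) (N : ℤ) := Int.isCoprime_iff_gcd_eq_one.mpr hapN
    have haN : IsCoprime a (N : ℤ) := hcop.of_mul_left_left
    have hpN : IsCoprime p (N : ℤ) := hcop.of_mul_left_right
    have hpQ : (p : ℚ) ≠ 0 := by exact_mod_cast hp
    have hcdm1 : f (d - 1) = a * m ^ (d - 1) := by
      rw [hform (d - 1) (by omega)]
      have e : d - 1 - (d - 1) = 0 := by omega
      rw [e]; ring
    have hd1 : d - 1 + 1 = d := by omega
    have hmm : m ^ d = m ^ (d - 1) * m := by rw [← pow_succ]; congr 1; omega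
    refine ⟨⟨m, p, Int.isCoprime_iff_gcd_eq_one.mp hpN, ?_⟩, ?_, ?_, ⟨(m : ℚ) / p, ?_⟩, ?_⟩
    · -- modular condition
      intro i hi
      rw [hf (i + 1) (by omega), hf i (by omega)]
      by_cases h2 : i + 1 < d
      · rw [hform (i + 1) h2, hform i (by omega)]
        have he : d - 1 - i = (d - 1 - (i + 1)) + 1 := by omega
        rw [he]
        have h0 : p * (a * p ^ (d - 1 - (i + 1)) * m ^ (i + 1))
            - m * (a * p ^ (d - 1 - (i + 1) + 1) * m ^ i) = 0 := by ring
        rw [h0]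
        exact dvd_zero _
      · have hi' : i = d - 1 := by omega
        subst hi'
        rw [hd1, hcd, hcdm1]
        have h0 : p * cd - m * (a * m ^ (d - 1)) = -(k * N) := by
          rw [← hcdeq, hmm]; ring
        rw [h0]
        exact dvd_neg.mpr ⟨k, mul_comm k (N : ℤ)⟩
    · -- all terms nonzero
      intro i
      have hi : c i = f i.1 := hf i.1 i.2
      rw [hi]
      by_cases h : (i : ℕ) < d
      · rw [hform i.1 h]
        exact mul_ne_zero (mul_ne_zero ha (pow_ne_zero _ hp)) (pow_ne_zero _ hm)
      · have : (i : ℕ) = d := by omega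
        rw [this, hcd]
        exact hcd0
    · -- gcd c0 N
      rw [hc00, hform 0 (by omega)]
      apply Int.isCoprime_iff_gcd_eq_one.mp
      simp only [pow_zero, mul_one, Nat.sub_zero]
      exact haN.mul_left (hpN.pow_left)
    · -- rational GP on the first d terms
      intro i hi
      rw [hf (i + 1) (by omega), hf i (by omega)]
      rw [hform (i + 1) hi, hform i (by omega)]
      have he : d - 1 - i = (d - 1 - (i + 1)) + 1 := by omega
      rw [he, pow_succ]
      push_cast
      field_simp
      ring
    · -- not a full rational GP
      rintro ⟨ρ, hρ⟩
      simp only [hf] at hρ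
      have h0 := hρ 0 (by omega)
      rw [hform 1 (by omega), hform 0 (by omega)] at h0
      push_cast at h0
      have hpe : (p : ℚ) ^ (d - 1 - 0) = (p : ℚ) ^ (d - 1 - 1) * p := by
        rw [← pow_succ]; congr 1; omega
      rw [hpe, pow_one, pow_zero, mul_one] at h0
      have haQ : (a : ℚ) * (p : ℚ) ^ (d - 1 - 1) ≠ 0 :=
        mul_ne_zero (by exact_mod_cast ha) (pow_ne_zero _ hpQ)
      have hρval : ρ * p = m := by
        have h1 : (a : ℚ) * (p : ℚ) ^ (d - 1 - 1) * (ρ * (p : ℚ))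
            = (a : ℚ) * (p : ℚ) ^ (d - 1 - 1) * (m : ℚ) := by
          calc (a : ℚ) * (p : ℚ) ^ (d - 1 - 1) * (ρ * (p : ℚ))
              = ρ * ((a : ℚ) * ((p : ℚ) ^ (d - 1 - 1) * (p : ℚ))) := by ring
            _ = (a : ℚ) * (p : ℚ) ^ (d - 1 - 1) * (m : ℚ) := h0.symm
        exact mul_left_cancel₀ haQ h1
      have hlast := hρ (d - 1) (by omega)
      rw [hd1, hcd, hcdm1] at hlast
      have hpcd : (p : ℚ) * cd = (a : ℚ) * m ^ d := by
        rw [hlast]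
        push_cast
        calc (p : ℚ) * (ρ * ((a : ℚ) * (m : ℚ) ^ (d - 1)))
            = (ρ * p) * ((a : ℚ) * (m : ℚ) ^ (d - 1)) := by ring
          _ = (m : ℚ) * ((a : ℚ) * (m : ℚ) ^ (d - 1)) := by rw [hρval]
          _ = (a : ℚ) * ((m : ℚ) ^ (d - 1) * (m : ℚ)) := by ring
          _ = (a : ℚ) * (m : ℚ) ^ d := by rw [← pow_succ, hd1]
      have hpcdZ : p * cd = a * m ^ d := by exact_mod_cast hpcd
      have hkN : k * (N : ℤ) = 0 := by linarith [hcdeq, hpcdZ]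
      rcases mul_eq_zero.mp hkN with h | h
      · exact hk h
      · exact absurd h (by positivity)
end

section
/- Let d ≥ 2 and let a, p, m, k be nonzero integers with gcd(m,p) = 1, gcd(ap, N) = 1, and c_d := (a m^d − kN)/p a nonzero integer. Set ã = a/gcd(a, c_d), k̃ = k/gcd(a, c_d). Let f̃ ∈ ℤ[x] be any degree-d polynomial with leading coefficient ã satisfying f̃(m/p)·p^d = k̃N. Then an integer vector (a₀,…,a_d) is orthogonal to the vector c = (a p^{d−1}, a p^{d−2}m, …, a m^{d−1}, c_d) if and only if there exist integers r₀,…,r_{d−1} such that Σ_{i=0}^d a_i x^i = r_{d−1} f̃(x) + (px − m)·Σ_{i=0}^{d−2} r_i x^i. -/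
open Polynomial Finset

/-- Lemma 4.2: let `c = (a p^{d−1}, a p^{d−2} m, …, a m^{d−1}, c_d)` with
`c_d = (a m^d − kN)/p` nonzero, `gcd(m,p)=1`, `gcd(ap,N)=1`, and set
`ã = a/gcd(a,c_d)`, `k̃ = k/gcd(a,c_d)`.  Then, for any degree-`d` polynomial
`f̃ ∈ ℤ[x]` with leading coefficient `ã` and `f̃(m/p)·p^d = k̃N`, an integer vector
`(a₀,…,a_d)` is orthogonal to `c` if and only if there exist integers `r₀,…,r_{d−1}` with
`Σ aᵢ xⁱ = r_{d−1} f̃(x) + (px − m)·Σ_{i≤d−2} rᵢ xⁱ`. -/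
theorem gp_orthogonal_basis (d : ℕ) (hd : 2 ≤ d) (N : ℕ) (hN : 0 < N)
    (a p m k : ℤ) (ha : a ≠ 0) (hp : p ≠ 0) (hm : m ≠ 0) (hk : k ≠ 0)
    (hmp : Int.gcd m p = 1) (hapN : Int.gcd (a * p) N = 1)
    (cd : ℤ) (hcd : cd ≠ 0) (hcdp : a * m ^ d - k * (N : ℤ) = p * cd)
    (c : Fin (d + 1) → ℤ)
    (hc : ∀ i : Fin (d + 1), (i : ℕ) < d → c i = a * p ^ (d - 1 - (i : ℕ)) * m ^ (i : ℕ))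
    (hclast : c ⟨d, by omega⟩ = cd)
    (f : Polynomial ℤ) (hfdeg : f.natDegree = d)
    (hflc : f.leadingCoeff = a / (Int.gcd a cd : ℤ))
    (hfval : ∑ i ∈ Finset.range (d + 1), f.coeff i * m ^ i * p ^ (d - i)
        = (k / (Int.gcd a cd : ℤ)) * N) :
    ∀ v : Fin (d + 1) → ℤ,
      (∑ i, v i * c i = 0) ↔
        ∃ r : ℕ → ℤ,
          (∑ i : Fin (d + 1), Polynomial.C (v i) * Polynomial.X ^ (i : ℕ)) =
            Polynomial.C (r (d - 1)) * f +
              (Polynomial.C p * Polynomial.X - Polynomial.C m) *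
                ∑ i ∈ Finset.range (d - 1), Polynomial.C (r i) * Polynomial.X ^ i := by
  -- Basic facts about g = gcd(a, cd)
  set g : ℤ := (Int.gcd a cd : ℤ) with hg_def
  have hgpos : 0 < Int.gcd a cd := Int.gcd_pos_of_ne_zero_left cd ha
  have hg0 : g ≠ 0 := by positivity
  have hga : g ∣ a := Int.gcd_dvd_left a cd
  have hgc : g ∣ cd := Int.gcd_dvd_right a cd
  have hgk : g ∣ k := by
    have h1 : g ∣ k * N := by
      have : k * (N : ℤ) = a * m ^ d - p * cd := by linarith
      rw [this]
      exact dvd_sub (hga.mul_right _) (hgc.mul_left _)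
    have h2 : IsCoprime g (N : ℤ) :=
      IsCoprime.of_isCoprime_of_dvd_left (Int.isCoprime_iff_gcd_eq_one.mpr hapN)
        (hga.trans (dvd_mul_right a p))
    exact h2.dvd_of_dvd_mul_right h1
  obtain ⟨a', ha'⟩ := hga
  obtain ⟨k', hk'⟩ := hgk
  obtain ⟨cd', hcd'⟩ := hgc
  have hag : a / g = a' := by rw [ha', Int.mul_ediv_cancel_left _ hg0]
  have hkg : k / g = k' := by rw [hk', Int.mul_ediv_cancel_left _ hg0]
  have hcdg : cd / g = cd' := by rw [hcd', Int.mul_ediv_cancel_left _ hg0]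
  have ha'0 : a' ≠ 0 := by rintro rfl; simp at ha'; exact ha ha'
  -- the ℕ-indexed version of c
  set c' : ℕ → ℤ := fun i => if i < d then a * p ^ (d - 1 - i) * m ^ i else cd with hc'_def
  have hcc' : ∀ i : Fin (d + 1), c i = c' (i : ℕ) := by
    intro i
    by_cases h : (i : ℕ) < d
    · rw [hc i h]; simp only [hc'_def, if_pos h]
    · have hi : (i : ℕ) = d := by omega
      have : i = ⟨d, by omega⟩ := Fin.ext hi
      rw [this, hclast]; simp only [hc'_def, hi, if_neg (lt_irrefl d)]
  -- the functional Φ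
  set Φ : ℤ[X] → ℤ := fun Q => ∑ i ∈ range (d + 1), Q.coeff i * c' i with hΦ_def
  -- the core identity
  have hcore : ∀ Q : ℤ[X],
      p * Φ Q = a * (∑ i ∈ range (d + 1), Q.coeff i * m ^ i * p ^ (d - i))
        - Q.coeff d * (k * N) := by
    intro Q
    simp only [hΦ_def]
    rw [sum_range_succ, sum_range_succ, mul_add, mul_add, Finset.mul_sum, Finset.mul_sum]
    have h1 : ∀ i ∈ range d, p * (Q.coeff i * c' i) = a * (Q.coeff i * m ^ i * p ^ (d - i)) := by
      intro i hi
      have hi' : i < d := mem_range.mp hi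
      have hpow : p ^ (d - i) = p ^ (d - 1 - i) * p := by
        rw [← pow_succ]; congr 1; omega
      simp only [hc'_def, if_pos hi', hpow]; ring
    rw [Finset.sum_congr rfl h1]
    have h2 : c' d = cd := if_neg (lt_irrefl d)
    rw [h2]
    have h3 : d - d = 0 := by omega
    rw [h3, pow_zero]
    linear_combination (-(Q.coeff d)) * hcdp
  -- coefficient of f at d
  have hfcd : f.coeff d = a' := by
    rw [← hfdeg, Polynomial.coeff_natDegree, hflc, hag]
  -- Φ(f) = 0
  have hΦf : Φ f = 0 := by
    have h := hcore f
    rw [hfval, hkg, hfcd] at h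
    have : a * (k' * N) - a' * (k * N) = 0 := by
      rw [ha', hk']; ring
    rw [this] at h
    exact (mul_eq_zero.mp h).resolve_left hp
  -- linearity of Φ
  have hΦsub : ∀ Q1 Q2 : ℤ[X], Φ (Q1 - Q2) = Φ Q1 - Φ Q2 := by
    intro Q1 Q2
    simp only [hΦ_def, coeff_sub, sub_mul, Finset.sum_sub_distrib]
  have hΦadd : ∀ Q1 Q2 : ℤ[X], Φ (Q1 + Q2) = Φ Q1 + Φ Q2 := by
    intro Q1 Q2
    simp only [hΦ_def, coeff_add, add_mul, Finset.sum_add_distrib]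
  have hΦCmul : ∀ (s : ℤ) (Q : ℤ[X]), Φ (C s * Q) = s * Φ Q := by
    intro s Q
    simp only [hΦ_def, coeff_C_mul, Finset.mul_sum, mul_assoc]
  have hΦsum : ∀ (t : Finset ℕ) (F : ℕ → ℤ[X]), Φ (∑ i ∈ t, F i) = ∑ i ∈ t, Φ (F i) := by
    intro t F
    simp only [hΦ_def, finset_sum_coeff, Finset.sum_mul]
    rw [Finset.sum_comm]
  have hΦmono : ∀ (s : ℤ) (n : ℕ), n < d + 1 → Φ (C s * X ^ n) = s * c' n := by
    intro s n hn
    simp only [hΦ_def, coeff_C_mul, coeff_X_pow, mul_ite, mul_one, mul_zero, ite_mul, zero_mul]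
    rw [Finset.sum_ite_eq', if_pos (mem_range.mpr hn)]
  intro v
  set P : ℤ[X] := ∑ i : Fin (d + 1), C (v i) * X ^ (i : ℕ) with hP_def
  have hPc : ∀ (j : ℕ) (hj : j < d + 1), P.coeff j = v ⟨j, hj⟩ := by
    intro j hj
    simp only [hP_def, finset_sum_coeff, coeff_C_mul, coeff_X_pow, mul_ite, mul_one, mul_zero]
    rw [Finset.sum_eq_single (⟨j, hj⟩ : Fin (d + 1))]
    · simp
    · intro b _ hb
      have hbj : (b : ℕ) ≠ j := fun h => hb (Fin.ext h)
      simp [hbj, Ne.symm hbj]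
    · simp
  have hPc0 : ∀ j : ℕ, d < j → P.coeff j = 0 := by
    intro j hj
    simp only [hP_def, finset_sum_coeff, coeff_C_mul, coeff_X_pow, mul_ite, mul_one, mul_zero]
    apply Finset.sum_eq_zero
    intro b _
    have hbj : (b : ℕ) ≠ j := by omega
    simp [hbj, Ne.symm hbj]
  have hLHS : (∑ i, v i * c i) = Φ P := by
    simp only [hΦ_def]
    rw [← Fin.sum_univ_eq_sum_range (fun i => P.coeff i * c' i) (d + 1)]
    apply Finset.sum_congr rfl
    intro i _
    rw [hPc i i.isLt, hcc' i]
  rw [hLHS]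
  constructor
  · -- forward direction
    intro hv
    -- a' divides v_d = P.coeff d
    have hadvd : a ∣ P.coeff d * cd := by
      have hsplit : P.coeff d * cd = -∑ i ∈ range d, P.coeff i * c' i := by
        have := hv
        simp only [hΦ_def] at this
        rw [sum_range_succ] at this
        have h2 : c' d = cd := if_neg (lt_irrefl d)
        rw [h2] at this
        linarith
      rw [hsplit, dvd_neg]
      apply Finset.dvd_sum
      intro i hi
      have hi' : i < d := mem_range.mp hi
      simp only [hc'_def, if_pos hi']
      exact ⟨P.coeff i * (p ^ (d - 1 - i) * m ^ i), by ring⟩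
    have hdvd1 : a' ∣ P.coeff d := by
      have h1 : a' * g ∣ (P.coeff d * cd') * g := by
        have : P.coeff d * cd' * g = P.coeff d * cd := by rw [hcd']; ring
        rw [this]
        have : a' * g = a := by rw [ha']; ring
        rw [this]; exact hadvd
      have h2 : a' ∣ P.coeff d * cd' := (mul_dvd_mul_iff_right hg0).mp h1
      have h3 : IsCoprime a' cd' := by
        rw [← hag, ← hcdg]
        exact Int.isCoprime_iff_gcd_eq_one.mpr (Int.gcd_div_gcd_div_gcd hgpos)
      exact h3.dvd_of_dvd_mul_right h2
    obtain ⟨s, hs⟩ := hdvd1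
    set Q : ℤ[X] := P - C s * f with hQ_def
    have hQd : Q.coeff d = 0 := by
      simp only [hQ_def, coeff_sub, coeff_C_mul, hfcd, hs]
      ring
    have hQdeg : Q.natDegree ≤ d - 1 := by
      rw [natDegree_le_iff_coeff_eq_zero]
      intro j hj
      rcases eq_or_lt_of_le (show d ≤ j by omega) with h | h
      · rw [← h]; exact hQd
      · simp only [hQ_def, coeff_sub, coeff_C_mul, hPc0 j h,
          coeff_eq_zero_of_natDegree_lt (by omega : f.natDegree < j)]
        ring
    have hΦQ : Φ Q = 0 := by
      rw [hQ_def, hΦsub, hΦCmul, hΦf, hv]; ring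
    have hHQ : ∑ i ∈ range (d + 1), Q.coeff i * m ^ i * p ^ (d - i) = 0 := by
      have h := hcore Q
      rw [hΦQ, hQd, mul_zero, zero_mul, sub_zero] at h
      exact (mul_eq_zero.mp h.symm).resolve_left ha
    by_cases hQ0 : Q = 0
    · refine ⟨fun i => if i = d - 1 then s else 0, ?_⟩
      have h1 : ∑ i ∈ range (d - 1), C (if i = d - 1 then s else (0:ℤ)) * X ^ i = 0 := by
        apply Finset.sum_eq_zero
        intro i hi
        have : i ≠ d - 1 := by have := mem_range.mp hi; omega
        simp [this]
      rw [h1, mul_zero, add_zero]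
      simp only [reduceIte]
      have h2 : P - C s * f = 0 := hQ0
      linear_combination h2
    · -- Q ≠ 0 : divide by pX - m
      set QQ : ℚ[X] := Q.map (Int.castRingHom ℚ) with hQQ_def
      have hp' : (p : ℚ) ≠ 0 := Int.cast_ne_zero.mpr hp
      have hQQdeg : QQ.natDegree < d + 1 :=
        lt_of_le_of_lt (natDegree_map_le.trans hQdeg) (by omega)
      have heval : QQ.eval ((m : ℚ) / p) = 0 := by
        have h1 : (p : ℚ) ^ d * QQ.eval ((m : ℚ) / p)
            = ∑ i ∈ range (d + 1), (Q.coeff i : ℚ) * m ^ i * p ^ (d - i) := by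
          rw [eval_eq_sum_range' hQQdeg, Finset.mul_sum]
          apply Finset.sum_congr rfl
          intro i hi
          have hi' : i ≤ d := by have := mem_range.mp hi; omega
          have hpow : (p : ℚ) ^ (d - i) * (p : ℚ) ^ i = (p : ℚ) ^ d := by
            rw [← pow_add]; congr 1; omega
          rw [hQQ_def, coeff_map, div_pow]
          field_simp
          linear_combination (-(Int.castRingHom ℚ (Q.coeff i))) * hpow
        have h2 : (∑ i ∈ range (d + 1), (Q.coeff i : ℚ) * m ^ i * p ^ (d - i)) = 0 := by
          have := congrArg (Int.cast : ℤ → ℚ) hHQ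
          push_cast at this
          exact this
        rw [h2] at h1
        exact (mul_eq_zero.mp h1).resolve_left (pow_ne_zero d hp')
      have hmapA : (C p * X - C m : ℤ[X]).map (Int.castRingHom ℚ)
          = C (p : ℚ) * X - C (m : ℚ) := by
        simp
      have hdvdQQ : (C (p : ℚ) * X - C (m : ℚ)) ∣ QQ := by
        have h1 : (X - C ((m : ℚ) / p)) ∣ QQ := dvd_iff_isRoot.mpr heval
        have h2 : C (p : ℚ) * X - C (m : ℚ) = C (p : ℚ) * (X - C ((m : ℚ) / p)) := by
          rw [mul_sub, ← C_mul, mul_div_cancel₀ _ hp']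
        rw [h2, mul_comm]
        exact ((isUnit_C.mpr (isUnit_iff_ne_zero.mpr hp')).mul_right_dvd).mpr h1
      have hprim : (C p * X - C m : ℤ[X]).IsPrimitive := by
        intro r hr
        rw [C_dvd_iff_dvd_coeff] at hr
        have h1 : r ∣ p := by
          have := hr 1
          simp only [coeff_sub, coeff_C_mul, coeff_X_one, mul_one, coeff_C,
            if_neg one_ne_zero, sub_zero] at this
          exact this
        have h0 : r ∣ m := by
          have := hr 0
          simp only [coeff_sub, coeff_C_mul, coeff_X_zero, mul_zero, coeff_C,
            if_pos rfl, zero_sub, dvd_neg] at this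
          exact this
        have : r ∣ (Int.gcd m p : ℤ) := Int.dvd_coe_gcd h0 h1
        rw [hmp] at this
        exact isUnit_of_dvd_one (by exact_mod_cast this)
      have hcont : (Q.content : ℚ) ≠ 0 := by
        simp only [ne_eq, Int.cast_eq_zero, content_eq_zero_iff]
        exact hQ0
      have hdvdPP : (C p * X - C m : ℤ[X]) ∣ Q.primPart := by
        rw [IsPrimitive.Int.dvd_iff_map_cast_dvd_map_cast _ _ hprim,
          hmapA]
        have hQQfac : QQ = C ((Q.content : ℚ)) * Q.primPart.map (Int.castRingHom ℚ) := by
          rw [hQQ_def]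
          conv_lhs => rw [Q.eq_C_content_mul_primPart]
          rw [Polynomial.map_mul, map_C]
          simp
        rw [hQQfac] at hdvdQQ
        exact ((isUnit_C.mpr (isUnit_iff_ne_zero.mpr hcont)).dvd_mul_left).mp hdvdQQ
      obtain ⟨R, hR⟩ := hdvdPP.trans Q.primPart_dvd
      have hlin : (C p * X - C m : ℤ[X]).natDegree = 1 := by
        have h1 : (C p * X - C m : ℤ[X]) = C p * X + C (-m) := by rw [C_neg]; ring
        rw [h1, natDegree_linear hp]
      have hA0 : (C p * X - C m : ℤ[X]) ≠ 0 := by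
        intro h; rw [h] at hlin; simp at hlin
      have hR0 : R ≠ 0 := by
        rintro rfl; rw [mul_zero] at hR; exact hQ0 hR
      have hRdeg : R.natDegree < d - 1 := by
        have h1 : Q.natDegree = 1 + R.natDegree := by
          rw [hR, natDegree_mul hA0 hR0, hlin]
        omega
      refine ⟨fun i => if i = d - 1 then s else R.coeff i, ?_⟩
      have hRsum : ∑ i ∈ range (d - 1), C (if i = d - 1 then s else R.coeff i) * X ^ i = R := by
        conv_rhs => rw [R.as_sum_range' (d - 1) hRdeg]
        apply Finset.sum_congr rfl
        intro i hi
        have : i ≠ d - 1 := by have := mem_range.mp hi; omega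
        rw [if_neg this, C_mul_X_pow_eq_monomial]
      simp only [reduceIte]
      rw [hRsum, ← hR, hQ_def]
      ring
  · -- backward direction
    rintro ⟨r, hr⟩
    rw [hr, hΦadd, hΦCmul, hΦf, mul_zero, zero_add]
    have hexp : (C p * X - C m) * ∑ i ∈ range (d - 1), C (r i) * X ^ i
        = ∑ i ∈ range (d - 1), (C (p * r i) * X ^ (i + 1) - C (m * r i) * X ^ i) := by
      rw [Finset.mul_sum]
      apply Finset.sum_congr rfl
      intro i _
      simp only [C_mul, pow_succ]
      ring
    rw [hexp, hΦsum]
    apply Finset.sum_eq_zero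
    intro i hi
    have hi' : i < d - 1 := mem_range.mp hi
    have h1 : Φ (C (p * r i) * X ^ (i + 1) - C (m * r i) * X ^ i)
        = (p * r i) * c' (i + 1) - (m * r i) * c' i := by
      rw [hΦsub, hΦmono _ _ (by omega), hΦmono _ _ (by omega)]
    rw [h1]
    have h2 : c' (i + 1) = a * p ^ (d - 1 - (i + 1)) * m ^ (i + 1) := if_pos (by omega)
    have h3 : c' i = a * p ^ (d - 1 - i) * m ^ i := if_pos (by omega)
    have h4 : p ^ (d - 1 - i) = p ^ (d - 1 - (i + 1)) * p := by
      rw [← pow_succ]; congr 1; omega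
    rw [h2, h3, h4, pow_succ]
    ring
end

section
/- With a, p, m, k, N nonzero integers, gcd(m,p)=1, gcd(ap,N)=1, c_d := (a m^d − kN)/p a nonzero integer, ã = a/gcd(a,c_d), k̃ = k/gcd(a,c_d): there exists a degree-d integer polynomial f̃ with leading coefficient ã such that f̃(m/p)·p^d = k̃N. -/
open Polynomial Finset

/-- Existence of the auxiliary polynomial `f̃` (produced by Algorithm 1): with
`a, p, m, k, N` nonzero integers, `gcd(m,p)=1`, `gcd(ap,N)=1`, and
`c_d = (a m^d − kN)/p` a nonzero integer, setting `ã = a/gcd(a,c_d)` and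
`k̃ = k/gcd(a,c_d)`, there exists a degree-`d` integer polynomial `f̃` with leading
coefficient `ã` such that `f̃(m/p)·p^d = k̃N` (i.e. `Σ ãᵢ mⁱ p^{d−i} = k̃N`). -/
theorem exists_base_mp_polynomial (d : ℕ) (hd : 2 ≤ d) (N : ℕ) (hN : 0 < N)
    (a p m k : ℤ) (ha : a ≠ 0) (hp : p ≠ 0) (hm : m ≠ 0) (hk : k ≠ 0)
    (hmp : Int.gcd m p = 1) (hapN : Int.gcd (a * p) N = 1)
    (cd : ℤ) (hcd : cd ≠ 0) (hcdp : a * m ^ d - k * (N : ℤ) = p * cd) :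
    ∃ f : Polynomial ℤ, f.natDegree = d ∧
      f.leadingCoeff = a / (Int.gcd a cd : ℤ) ∧
      ∑ i ∈ Finset.range (d + 1), f.coeff i * m ^ i * p ^ (d - i)
        = (k / (Int.gcd a cd : ℤ)) * N := by
  set g : ℤ := (Int.gcd a cd : ℤ) with hg
  have hg0 : g ≠ 0 := by
    simp only [hg, ne_eq, Int.natCast_eq_zero]
    exact fun h => ha (Int.gcd_eq_zero_iff.mp h).1
  have hga : g ∣ a := Int.gcd_dvd_left a cd
  have hgc : g ∣ cd := Int.gcd_dvd_right a cd
  have hcopaN : IsCoprime a (N : ℤ) := by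
    have := Int.isCoprime_iff_gcd_eq_one.mpr hapN
    exact (IsCoprime.mul_left_iff.mp this).1
  have hgk : g ∣ k := by
    have h1 : g ∣ k * N := by
      have : k * (N : ℤ) = a * m ^ d - p * cd := by linarith
      rw [this]
      exact dvd_sub (hga.mul_right _) (hgc.mul_left _)
    exact (IsCoprime.of_isCoprime_of_dvd_left hcopaN hga).dvd_of_dvd_mul_right h1
  obtain ⟨A, hA⟩ := hga
  obtain ⟨K, hK⟩ := hgk
  obtain ⟨Cg, hCg⟩ := hgc
  have hdivA : a / g = A := by rw [hA]; exact Int.mul_ediv_cancel_left _ hg0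
  have hdivK : k / g = K := by rw [hK]; exact Int.mul_ediv_cancel_left _ hg0
  have hA0 : A ≠ 0 := by rintro rfl; simp at hA; exact ha hA
  have key : A * m ^ d - K * (N : ℤ) = p * Cg := by
    apply mul_left_cancel₀ hg0
    rw [mul_sub]
    rw [hA, hK, hCg] at hcdp
    linarith [hcdp]
  obtain ⟨u, v, huv⟩ := ((Int.isCoprime_iff_gcd_eq_one.mpr hmp).pow
    (m := d - 1) (n := d - 1))
  have h1 : (Polynomial.C (-Cg * v) + Polynomial.C (-Cg * u) * X ^ (d - 1)).natDegree
      < (Polynomial.C A * X ^ d).natDegree := by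
    rw [natDegree_C_mul_X_pow _ _ hA0]
    refine lt_of_le_of_lt (natDegree_add_le _ _) ?_
    have h2 : (Polynomial.C (-Cg * u) * X ^ (d - 1)).natDegree ≤ d - 1 := by
      refine le_trans (natDegree_mul_le) ?_
      rw [natDegree_C, natDegree_X_pow]; omega
    simp only [natDegree_C, max_le_iff]
    omega
  refine ⟨Polynomial.C (-Cg * v) + Polynomial.C (-Cg * u) * X ^ (d - 1)
      + Polynomial.C A * X ^ d, ?_, ?_, ?_⟩
  · rw [natDegree_add_eq_right_of_natDegree_lt h1, natDegree_C_mul_X_pow _ _ hA0]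
  · rw [leadingCoeff, natDegree_add_eq_right_of_natDegree_lt h1,
      natDegree_C_mul_X_pow _ _ hA0, hdivA]
    have hd0 : d ≠ 0 := by omega
    have hdd : d - 1 ≠ d := by omega
    rw [coeff_add, coeff_add, coeff_C, coeff_C_mul, coeff_X_pow, coeff_C_mul, coeff_X_pow]
    simp [hd0, hdd, Ne.symm hdd]
  · have hrw : ∀ i ∈ Finset.range (d + 1),
        (Polynomial.C (-Cg * v) + Polynomial.C (-Cg * u) * X ^ (d - 1)
          + Polynomial.C A * X ^ d).coeff i * m ^ i * p ^ (d - i)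
        = (if i = 0 then -Cg * v * p ^ d else 0)
          + (if i = d - 1 then -Cg * u * m ^ (d - 1) * p else 0)
          + (if i = d then A * m ^ d else 0) := by
      intro i hi
      rw [coeff_add, coeff_add, coeff_C, coeff_C_mul, coeff_X_pow, coeff_C_mul, coeff_X_pow]
      rcases eq_or_ne i 0 with rfl | h0
      · simp [show ¬ ((0:ℕ) = d - 1) from by omega, show ¬ ((0:ℕ) = d) from by omega]
      rcases eq_or_ne i (d - 1) with rfl | h1
      · simp [h0, show ¬ (d - 1 = d) from by omega, show d - (d - 1) = 1 from by omega]
      rcases eq_or_ne i d with rfl | h2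
      · simp [h0, h1]
      · simp [h0, h1, h2]
    rw [Finset.sum_congr rfl hrw, Finset.sum_add_distrib, Finset.sum_add_distrib,
      Finset.sum_ite_eq' , Finset.sum_ite_eq', Finset.sum_ite_eq']
    have m0 : (0 : ℕ) ∈ Finset.range (d + 1) := by simp
    have m1 : d - 1 ∈ Finset.range (d + 1) := by simp
    have m2 : d ∈ Finset.range (d + 1) := by simp
    rw [if_pos m0, if_pos m1, if_pos m2, hdivK]
    have hpd : (p : ℤ) ^ d = p ^ (d - 1) * p := by
      rw [← pow_succ]; congr 1; omega
    rw [hpd]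
    linear_combination key - Cg * p * huv
end
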